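/- Let α, β : ℝ → ℝ be continuously differentiable with α(t) ≠ 0 for all t, and let Γ : ℝ^m → (ℝ^m × ℝ^m → ℝ^m) be a continuously differentiable field of bilinear maps. Then for every p, v ∈ ℝ^m there exist T > 0 and a unique C² curve x : (−T, T) → ℝ^m with x(0) = p, x'(0) = v, satisfying the geodesic-in-expectation equation α(t)·(x''(t) + Γ(x(t))(x'(t), x'(t))) + β(t)·x'(t) = 0 for all t ∈ (−T, T). -/

import Mathlib

open Set Filter Topology

section Aux

variable {A B : Type*} [NormedAddCommGroup A] [NormedSpace ℝ A]
  [NormedAddCommGroup B] [NormedSpace ℝ B]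

lemma hasDerivAt_fst_comp {f : ℝ → A × B} {d : A × B} {t : ℝ} (h : HasDerivAt f d t) :
    HasDerivAt (fun u => (f u).1) d.1 t := by
  simpa using (h.hasFDerivAt.fst).hasDerivAt

lemma hasDerivAt_snd_comp {f : ℝ → A × B} {d : A × B} {t : ℝ} (h : HasDerivAt f d t) :
    HasDerivAt (fun u => (f u).2) d.2 t := by
  simpa using (h.hasFDerivAt.snd).hasDerivAt

end Aux

/-- The first-order autonomous vector field associated to the geodesic-in-expectation
equation, on the extended state space `ℝ × E × E` (time, position, velocity). -/
noncomputable def geoF {m : ℕ} (α β : ℝ → ℝ)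
    (Γ : EuclideanSpace ℝ (Fin m) →
      (EuclideanSpace ℝ (Fin m) →L[ℝ] EuclideanSpace ℝ (Fin m) →L[ℝ]
        EuclideanSpace ℝ (Fin m))) :
    ℝ × EuclideanSpace ℝ (Fin m) × EuclideanSpace ℝ (Fin m) →
      ℝ × EuclideanSpace ℝ (Fin m) × EuclideanSpace ℝ (Fin m) :=
  fun z => (1, z.2.2, -(Γ z.2.1 z.2.2 z.2.2) - (β z.1 / α z.1) • z.2.2)

lemma geoF_contDiff {m : ℕ} (α β : ℝ → ℝ) (hα : ContDiff ℝ 1 α) (hβ : ContDiff ℝ 1 β)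
    (hα0 : ∀ t, α t ≠ 0)
    (Γ : EuclideanSpace ℝ (Fin m) →
      (EuclideanSpace ℝ (Fin m) →L[ℝ] EuclideanSpace ℝ (Fin m) →L[ℝ]
        EuclideanSpace ℝ (Fin m)))
    (hΓ : ContDiff ℝ 1 Γ) : ContDiff ℝ 1 (geoF α β Γ) := by
  apply contDiff_const.prodMk
  apply (contDiff_snd.comp contDiff_snd).prodMk
  apply ContDiff.sub
  · exact (((hΓ.comp (contDiff_fst.comp contDiff_snd)).clm_apply
      (contDiff_snd.comp contDiff_snd)).clm_apply (contDiff_snd.comp contDiff_snd)).neg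
  · exact (((hβ.comp contDiff_fst).div (hα.comp contDiff_fst)
      (fun z => hα0 z.1)).smul (contDiff_snd.comp contDiff_snd))

/-- Let `α, β : ℝ → ℝ` be `C¹` with `α(t) ≠ 0` for all `t`, and let
`Γ : ℝ^m → (ℝ^m × ℝ^m → ℝ^m)` be a `C¹` field of bilinear maps (the Christoffel symbols).
Then for every `p, v ∈ ℝ^m` there exist `T > 0` and a unique `C²` curve
`x : (−T, T) → ℝ^m` with `x(0) = p`, `x'(0) = v`, satisfying the geodesic-in-expectation
equation `α(t)·(x''(t) + Γ(x(t))(x'(t), x'(t))) + β(t)·x'(t) = 0` on `(−T, T)`; uniqueness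
means that any two `C²` solutions with the same initial position and velocity agree on the
intersection of their domains. -/
theorem geodesic_in_expectation_exists_unique {m : ℕ}
    (α β : ℝ → ℝ) (hα : ContDiff ℝ 1 α) (hβ : ContDiff ℝ 1 β)
    (hα0 : ∀ t, α t ≠ 0)
    (Γ : EuclideanSpace ℝ (Fin m) →
      (EuclideanSpace ℝ (Fin m) →L[ℝ] EuclideanSpace ℝ (Fin m) →L[ℝ]
        EuclideanSpace ℝ (Fin m)))
    (hΓ : ContDiff ℝ 1 Γ) :
    ∀ p v : EuclideanSpace ℝ (Fin m),
      ∃ T > (0 : ℝ), ∃ x : ℝ → EuclideanSpace ℝ (Fin m),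
        (ContDiffOn ℝ 2 x (Set.Ioo (-T) T) ∧ x 0 = p ∧ deriv x 0 = v ∧
          ∀ t ∈ Set.Ioo (-T) T,
            α t • (deriv (deriv x) t + Γ (x t) (deriv x t) (deriv x t))
              + β t • deriv x t = 0) ∧
        ∀ (T' : ℝ), 0 < T' → ∀ y : ℝ → EuclideanSpace ℝ (Fin m),
          ContDiffOn ℝ 2 y (Set.Ioo (-T') T') → y 0 = p → deriv y 0 = v →
          (∀ t ∈ Set.Ioo (-T') T',
            α t • (deriv (deriv y) t + Γ (y t) (deriv y t) (deriv y t))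
              + β t • deriv y t = 0) →
          Set.EqOn x y (Set.Ioo (-T) T ∩ Set.Ioo (-T') T') := by
  intro p v
  have hF : ContDiff ℝ 1 (geoF α β Γ) := geoF_contDiff α β hα hβ hα0 Γ hΓ
  obtain ⟨f, hf0, ε, hε, hf'⟩ :=
    ContDiffAt.exists_forall_mem_closedBall_exists_eq_forall_mem_Ioo_hasDerivAt₀ (hF.contDiffAt (x := ((0 : ℝ), p, v))) (0 : ℝ)
  have hIoo : Ioo ((0:ℝ) - ε) (0 + ε) = Ioo (-ε) ε := by norm_num
  rw [hIoo] at hf'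
  set S : Set ℝ := Ioo (-ε) ε with hS
  have h0S : (0:ℝ) ∈ S := ⟨by linarith, hε⟩
  -- the time component is `t`
  have htime : ∀ t ∈ S, (f t).1 = t := by
    intro t ht
    have key : ∀ u ∈ S, HasDerivWithinAt (fun u => (f u).1 - u) 0 S u := by
      intro u hu
      have h1 : HasDerivAt (fun u => (f u).1 - u) ((geoF α β Γ (f u)).1 - 1) u :=
        (hasDerivAt_fst_comp (hf' u hu)).sub (hasDerivAt_id u)
      simpa [geoF] using h1.hasDerivWithinAt
    have hb := (convex_Ioo (-ε) ε).norm_image_sub_le_of_norm_hasDerivWithin_le (C := 0) key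
      (fun u _ => by simp) h0S ht
    have hf00 : (f 0).1 = 0 := by rw [hf0]
    simp only [hf00, zero_mul, sub_zero] at hb
    have : (f t).1 - t - 0 = 0 := by
      have := norm_le_zero_iff.mp (by simpa using hb)
      simpa using this
    linarith [this]
  -- derivatives of the position and velocity components
  have hx' : ∀ t ∈ S, HasDerivAt (fun u => (f u).2.1) ((f t).2.2) t := by
    intro t ht
    simpa [geoF] using hasDerivAt_fst_comp (hasDerivAt_snd_comp (hf' t ht))
  have hw' : ∀ t ∈ S, HasDerivAt (fun u => (f u).2.2)
      (-(Γ ((f t).2.1) ((f t).2.2) ((f t).2.2)) - (β t / α t) • (f t).2.2) t := by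
    intro t ht
    have h1 := hasDerivAt_snd_comp (hasDerivAt_snd_comp (hf' t ht))
    simpa [geoF, htime t ht] using h1
  set x : ℝ → EuclideanSpace ℝ (Fin m) := fun u => (f u).2.1 with hxdef
  set w : ℝ → EuclideanSpace ℝ (Fin m) := fun u => (f u).2.2 with hwdef
  have hderivx : ∀ t ∈ S, deriv x t = w t := fun t ht => (hx' t ht).deriv
  have hdd : ∀ t ∈ S, deriv (deriv x) t
      = -(Γ (x t) (w t) (w t)) - (β t / α t) • w t := by
    intro t ht
    have hev : deriv x =ᶠ[𝓝 t] w := by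
      filter_upwards [isOpen_Ioo.mem_nhds ht] with u hu using hderivx u hu
    rw [hev.deriv_eq]
    exact (hw' t ht).deriv
  have hcx : ContinuousOn x S := fun t ht => (hx' t ht).continuousAt.continuousWithinAt
  have hcw : ContinuousOn w S := fun t ht => (hw' t ht).continuousAt.continuousWithinAt
  have hG : ContinuousOn (fun t => -(Γ (x t) (w t) (w t)) - (β t / α t) • w t) S := by
    apply ContinuousOn.sub
    · exact (((hΓ.continuous.comp_continuousOn hcx).clm_apply hcw).clm_apply hcw).neg
    · exact (((hβ.continuous.continuousOn).div (hα.continuous.continuousOn)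
        (fun t _ => hα0 t)).smul hcw)
  have hw1 : ContDiffOn ℝ 1 w S := by
    rw [show (1 : WithTop ℕ∞) = 0 + 1 from rfl,
      contDiffOn_succ_iff_deriv_of_isOpen isOpen_Ioo]
    refine ⟨fun t ht => (hw' t ht).differentiableAt.differentiableWithinAt,
      by simp, ?_⟩
    rw [contDiffOn_zero]
    exact hG.congr (fun t ht => (hw' t ht).deriv)
  have hx2 : ContDiffOn ℝ 2 x S := by
    rw [show (2 : WithTop ℕ∞) = 1 + 1 from by norm_num,
      contDiffOn_succ_iff_deriv_of_isOpen isOpen_Ioo]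
    exact ⟨fun t ht => (hx' t ht).differentiableAt.differentiableWithinAt,
      by simp, hw1.congr hderivx⟩
  refine ⟨ε, hε, x, ⟨hx2, by simp [hxdef, hf0], by rw [hderivx 0 h0S]; simp [hwdef, hf0], ?_⟩, ?_⟩
  · -- the equation
    intro t ht
    rw [hdd t ht, hderivx t ht]
    have h1 : -(Γ (x t) (w t) (w t)) - (β t / α t) • w t + Γ (x t) (w t) (w t)
        = -((β t / α t) • w t) := by abel
    rw [h1, smul_neg, smul_smul]
    have h2 : α t * (β t / α t) = β t := by
      rw [← mul_div_assoc]; exact mul_div_cancel_left₀ _ (hα0 t)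
    rw [h2, neg_add_cancel]
  · -- uniqueness
    intro T' hT' y hy hy0 hy'0 heqn
    set S' : Set ℝ := Ioo (-T') T' with hS'
    set c : ℝ := min ε T' with hc
    have hc0 : 0 < c := lt_min hε hT'
    have hJ : S ∩ S' = Ioo (-c) c := by
      rw [hS, hS', Set.Ioo_inter_Ioo]
      congr 1
      · rw [hc]; exact (max_neg_neg ε T').symm ▸ rfl
    have hJ1 : Ioo (-c) c ⊆ S := Ioo_subset_Ioo (by simp [hc]) (min_le_left _ _)
    have hJ2 : Ioo (-c) c ⊆ S' := Ioo_subset_Ioo (by simp [hc]) (min_le_right _ _)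
    have h0J : (0:ℝ) ∈ Ioo (-c) c := ⟨by linarith, hc0⟩
    -- facts about y
    have hy_diff : ∀ t ∈ S', HasDerivAt y (deriv y t) t := fun t ht =>
      ((hy.differentiableOn (by norm_num)).differentiableAt
        (isOpen_Ioo.mem_nhds ht)).hasDerivAt
    have hy2 : ContDiffOn ℝ ((1:WithTop ℕ∞) + 1) y S' := by
      rw [show (1 : WithTop ℕ∞) + 1 = 2 from by norm_num]; exact hy
    obtain ⟨-, -, hyd1⟩ := (contDiffOn_succ_iff_deriv_of_isOpen isOpen_Ioo).mp hy2
    have hy'_diff : ∀ t ∈ S', HasDerivAt (deriv y) (deriv (deriv y) t) t := fun t ht =>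
      ((hyd1.differentiableOn one_ne_zero).differentiableAt
        (isOpen_Ioo.mem_nhds ht)).hasDerivAt
    have hyy : ∀ t ∈ S', deriv (deriv y) t
        = -(Γ (y t) (deriv y t) (deriv y t)) - (β t / α t) • deriv y t := by
      intro t ht
      have h := heqn t ht
      have h2 : α t • (deriv (deriv y) t + Γ (y t) (deriv y t) (deriv y t))
          = -(β t • deriv y t) := by rwa [add_eq_zero_iff_eq_neg] at h
      have h3 : deriv (deriv y) t + Γ (y t) (deriv y t) (deriv y t)
          = -((β t / α t) • deriv y t) := by
        have h4 := congrArg (fun z => (α t)⁻¹ • z) h2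
        simpa [inv_smul_smul₀ (hα0 t), smul_smul, smul_neg, div_eq_inv_mul] using h4
      have h5 := eq_sub_of_add_eq h3
      rw [h5]; abel
    -- both extended curves solve the autonomous ODE on `Ioo (-c) c`
    set fy : ℝ → ℝ × EuclideanSpace ℝ (Fin m) × EuclideanSpace ℝ (Fin m) :=
      fun u => (u, y u, deriv y u) with hfydef
    have hfy' : ∀ t ∈ Ioo (-c) c, HasDerivAt fy (geoF α β Γ (fy t)) t := by
      intro t ht
      have ht' := hJ2 ht
      have h1 := (hasDerivAt_id t).prodMk ((hy_diff t ht').prodMk (hy'_diff t ht'))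
      simpa [hfydef, geoF, hyy t ht'] using h1
    have hff' : ∀ t ∈ Ioo (-c) c, HasDerivAt f (geoF α β Γ (f t)) t :=
      fun t ht => hf' t (hJ1 ht)
    have heq0 : f 0 = fy 0 := by rw [hf0, hfydef]; simp [hy0, hy'0]
    -- local uniqueness
    have key : ∀ t₀ ∈ Ioo (-c) c, f t₀ = fy t₀ → ∀ᶠ t in 𝓝 t₀, f t = fy t := by
      intro t₀ ht₀ heqt
      obtain ⟨K, sset, hsset, hlip⟩ :=
        (hF.contDiffAt (x := f t₀)).exists_lipschitzOnWith
      have hJn : Ioo (-c) c ∈ 𝓝 t₀ := isOpen_Ioo.mem_nhds ht₀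
      have h1 : ∀ᶠ t in 𝓝 t₀, HasDerivAt f (geoF α β Γ (f t)) t ∧ f t ∈ sset := by
        filter_upwards [hJn, (hff' t₀ ht₀).continuousAt.preimage_mem_nhds hsset]
          with t ha hb
        exact ⟨hff' t ha, hb⟩
      have h2 : ∀ᶠ t in 𝓝 t₀, HasDerivAt fy (geoF α β Γ (fy t)) t ∧ fy t ∈ sset := by
        filter_upwards [hJn, (hfy' t₀ ht₀).continuousAt.preimage_mem_nhds
          (heqt ▸ hsset)] with t ha hb
        exact ⟨hfy' t ha, hb⟩
      exact ODE_solution_unique_of_eventually (Filter.Eventually.of_forall (fun _ => hlip)) h1 h2 heqt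
    -- clopen argument
    set Aset : Set ℝ := {t | f t = fy t} with hAdef
    set V : Set ℝ := Ioo (-c) c ∩ (fun t => (f t, fy t)) ⁻¹' (Set.diagonal _)ᶜ with hVdef
    have hVopen : IsOpen V := by
      apply ContinuousOn.isOpen_inter_preimage
      · exact fun t ht => ((hff' t ht).continuousAt.prodMk
          (hfy' t ht).continuousAt).continuousWithinAt
      · exact isOpen_Ioo
      · exact isClosed_diagonal.isOpen_compl
    have hsub : Ioo (-c) c ⊆ interior Aset ∪ V := by
      intro t ht
      by_cases h : f t = fy t
      · exact Or.inl (mem_interior_iff_mem_nhds.mpr (key t ht h))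
      · exact Or.inr ⟨ht, h⟩
    have hne1 : (Ioo (-c) c ∩ interior Aset).Nonempty :=
      ⟨0, h0J, mem_interior_iff_mem_nhds.mpr (key 0 h0J heq0)⟩
    have hVempty : ¬ (Ioo (-c) c ∩ V).Nonempty := by
      intro hne2
      obtain ⟨t, -, htU, -, htV⟩ :=
        isPreconnected_Ioo _ _ isOpen_interior hVopen hsub hne1 hne2
      have h5 : t ∈ Aset := interior_subset htU
      exact htV h5
    rw [hJ]
    intro t ht
    have hfeq : f t = fy t := by
      by_contra h
      exact hVempty ⟨t, ht, ht, h⟩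
    have := congrArg (fun z => z.2.1) hfeq
    simpa [hxdef, hfydef] using this
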